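/- Let φ : [0,∞) → [0,∞) be strictly increasing, continuous, convex with φ(0) = 0, and such that log φ(x) is a convex function of log x. Then for any two nonnegative sequences (aₙ) and (bₙ), φ⁻¹( ∑ₙ φ(aₙ + bₙ) ) ≤ φ⁻¹( ∑ₙ φ(aₙ) ) + φ⁻¹( ∑ₙ φ(bₙ) ) (generalized Minkowski inequality). -/

import Mathlib

open Filter Topology

private lemma conv_shift {ψ : ℝ → ℝ} (h : ConvexOn ℝ Set.univ ψ)
    {u v τ : ℝ} (huv : u ≤ v) (hτ : 0 ≤ τ) :
    ψ (u + τ) + ψ v ≤ ψ u + ψ (v + τ) := by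
  rcases eq_or_lt_of_le hτ with rfl | hτ'
  · simp
  have hd : (0:ℝ) < v + τ - u := by linarith
  set μ := τ / (v + τ - u) with hμdef
  have hμ0 : 0 ≤ μ := by positivity
  have hμ1 : μ ≤ 1 := by rw [hμdef, div_le_one hd]; linarith
  have hμd : μ * (v + τ - u) = τ := div_mul_cancel₀ _ (ne_of_gt hd)
  have h1 := h.2 (Set.mem_univ u) (Set.mem_univ (v + τ)) (by linarith : 0 ≤ 1 - μ) hμ0
      (by ring)
  have h2 := h.2 (Set.mem_univ u) (Set.mem_univ (v + τ)) hμ0 (by linarith : 0 ≤ 1 - μ)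
      (by ring)
  simp only [smul_eq_mul] at h1 h2
  have e1 : (1 - μ) * u + μ * (v + τ) = u + τ := by nlinarith [hμd]
  have e2 : μ * u + (1 - μ) * (v + τ) = v := by nlinarith [hμd]
  rw [e1] at h1
  rw [e2] at h2
  linarith [h1, h2]

private lemma geom_key {φ : ℝ → ℝ}
    (hmono : StrictMonoOn φ (Set.Ici 0)) (h0 : φ 0 = 0)
    (hlogconv : ConvexOn ℝ Set.univ (fun u => Real.log (φ (Real.exp u))))
    {x y t : ℝ} (hx : 0 < x) (hxy : x ≤ y) (ht : 1 ≤ t) :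
    φ (t * x) * φ y ≤ φ x * φ (t * y) := by
  have hpos : ∀ z : ℝ, 0 < z → 0 < φ z := fun z hz => by
    have := hmono (Set.self_mem_Ici) (Set.mem_Ici.2 hz.le) hz
    linarith [h0 ▸ this]
  have hy : 0 < y := lt_of_lt_of_le hx hxy
  have ht0 : 0 < t := lt_of_lt_of_le one_pos ht
  have hτ : 0 ≤ Real.log t := Real.log_nonneg ht
  have huv : Real.log x ≤ Real.log y := Real.log_le_log hx hxy
  have key := conv_shift hlogconv huv hτ
  have e1 : Real.exp (Real.log x + Real.log t) = t * x := by
    rw [Real.exp_add, Real.exp_log hx, Real.exp_log ht0]; ring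
  have e2 : Real.exp (Real.log y + Real.log t) = t * y := by
    rw [Real.exp_add, Real.exp_log hy, Real.exp_log ht0]; ring
  rw [e1, e2, Real.exp_log hx, Real.exp_log hy] at key
  have htx : 0 < φ (t * x) := hpos _ (by positivity)
  have hty : 0 < φ (t * y) := hpos _ (by positivity)
  have hfx : 0 < φ x := hpos _ hx
  have hfy : 0 < φ y := hpos _ hy
  rw [← Real.log_mul (ne_of_gt htx) (ne_of_gt hfy),
      ← Real.log_mul (ne_of_gt hfx) (ne_of_gt hty)] at key
  exact (Real.log_le_log_iff (by positivity) (by positivity)).1 key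

/-- Generalized Minkowski inequality: if `φ : [0,∞) → [0,∞)` is strictly increasing,
continuous, convex, `φ(0) = 0`, and `log φ` is a convex function of `log x`, then for
nonnegative sequences `(aᵢ)`, `(bᵢ)`,
`φ⁻¹(∑ φ(aᵢ+bᵢ)) ≤ φ⁻¹(∑ φ(aᵢ)) + φ⁻¹(∑ φ(bᵢ))`. -/
theorem generalized_minkowski
    (φ φinv : ℝ → ℝ)
    (hmono : StrictMonoOn φ (Set.Ici 0))
    (hcont : ContinuousOn φ (Set.Ici 0))
    (h0 : φ 0 = 0)
    (hconv : ConvexOn ℝ (Set.Ici 0) φ)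
    (hlogconv : ConvexOn ℝ Set.univ (fun u => Real.log (φ (Real.exp u))))
    (hinv₁ : ∀ x ∈ Set.Ici (0 : ℝ), φinv (φ x) = x)
    (hinv₂ : ∀ y ∈ Set.Ici (0 : ℝ), φinv y ∈ Set.Ici (0 : ℝ) ∧ φ (φinv y) = y)
    {ι : Type*} (s : Finset ι) (a b : ι → ℝ)
    (ha : ∀ i ∈ s, 0 ≤ a i) (hb : ∀ i ∈ s, 0 ≤ b i) :
    φinv (∑ i ∈ s, φ (a i + b i)) ≤ φinv (∑ i ∈ s, φ (a i)) + φinv (∑ i ∈ s, φ (b i)) := by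
  have hφ0le : ∀ x : ℝ, 0 ≤ x → 0 ≤ φ x := fun x hx => by
    have := hmono.monotoneOn Set.self_mem_Ici (Set.mem_Ici.2 hx) hx
    linarith [h0 ▸ this]
  have hle_of_φle : ∀ u v : ℝ, 0 ≤ u → 0 ≤ v → φ u ≤ φ v → u ≤ v := by
    intro u v hu hv h
    by_contra hc
    push_neg at hc
    exact absurd (hmono (Set.mem_Ici.2 hv) (Set.mem_Ici.2 hu) hc) (not_lt.2 h)
  have hSa : 0 ≤ ∑ i ∈ s, φ (a i) := Finset.sum_nonneg fun i hi => hφ0le _ (ha i hi)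
  have hSb : 0 ≤ ∑ i ∈ s, φ (b i) := Finset.sum_nonneg fun i hi => hφ0le _ (hb i hi)
  set A := φinv (∑ i ∈ s, φ (a i)) with hAdef
  set B := φinv (∑ i ∈ s, φ (b i)) with hBdef
  obtain ⟨hA0, hφA⟩ := hinv₂ _ (Set.mem_Ici.2 hSa)
  obtain ⟨hB0, hφB⟩ := hinv₂ _ (Set.mem_Ici.2 hSb)
  rw [Set.mem_Ici] at hA0 hB0
  rw [← hAdef] at hA0 hφA
  rw [← hBdef] at hB0 hφB
  -- degenerate cases
  by_cases hAz : A = 0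
  · have hsum0 : ∑ i ∈ s, φ (a i) = 0 := by rw [← hφA, hAz, h0]
    have hall : ∀ i ∈ s, a i = 0 := by
      intro i hi
      have := (Finset.sum_eq_zero_iff_of_nonneg fun j hj => hφ0le _ (ha j hj)).1 hsum0 i hi
      exact hmono.injOn (Set.mem_Ici.2 (ha i hi)) Set.self_mem_Ici (by rw [this, h0])
    have : ∑ i ∈ s, φ (a i + b i) = ∑ i ∈ s, φ (b i) :=
      Finset.sum_congr rfl fun i hi => by rw [hall i hi, zero_add]
    rw [this, hAz, zero_add]
  by_cases hBz : B = 0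
  · have hsum0 : ∑ i ∈ s, φ (b i) = 0 := by rw [← hφB, hBz, h0]
    have hall : ∀ i ∈ s, b i = 0 := by
      intro i hi
      have := (Finset.sum_eq_zero_iff_of_nonneg fun j hj => hφ0le _ (hb j hj)).1 hsum0 i hi
      exact hmono.injOn (Set.mem_Ici.2 (hb i hi)) Set.self_mem_Ici (by rw [this, h0])
    have : ∑ i ∈ s, φ (a i + b i) = ∑ i ∈ s, φ (a i) :=
      Finset.sum_congr rfl fun i hi => by rw [hall i hi, add_zero]
    rw [this, hBz, add_zero]
  have hA : 0 < A := lt_of_le_of_ne hA0 (Ne.symm hAz)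
  have hB : 0 < B := lt_of_le_of_ne hB0 (Ne.symm hBz)
  have hAB : 0 < A + B := by linarith
  -- scaled sums lemma
  have hscale : ∀ (c : ι → ℝ) (C t : ℝ), 0 < C → 1 ≤ t → (∀ i ∈ s, 0 ≤ c i) →
      φ C = ∑ i ∈ s, φ (c i) → ∑ i ∈ s, φ (t * c i) ≤ φ (t * C) := by
    intro c C t hC ht hc hφC
    have hφCpos : 0 < φ C := by
      have := hmono Set.self_mem_Ici (Set.mem_Ici.2 hC.le) hC
      linarith [h0 ▸ this]
    have hterm : ∀ i ∈ s, φ (t * c i) ≤ φ (c i) * (φ (t * C) / φ C) := by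
      intro i hi
      rcases eq_or_lt_of_le (hc i hi) with hz | hz
      · rw [← hz]
        simp [h0]
      · have hciC : c i ≤ C := by
          apply hle_of_φle _ _ (hc i hi) hC.le
          rw [hφC]
          exact Finset.single_le_sum (fun j hj => hφ0le _ (hc j hj)) hi
        have hg := geom_key hmono h0 hlogconv hz hciC ht
        rw [← mul_div_assoc, le_div_iff₀ hφCpos]
        exact hg
    calc ∑ i ∈ s, φ (t * c i) ≤ ∑ i ∈ s, φ (c i) * (φ (t * C) / φ C) :=
          Finset.sum_le_sum hterm
      _ = (∑ i ∈ s, φ (c i)) * (φ (t * C) / φ C) := by rw [Finset.sum_mul]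
      _ = φ (t * C) := by rw [← hφC]; field_simp
  -- convexity step
  set t₁ := (A + B) / A with ht₁def
  set t₂ := (A + B) / B with ht₂def
  have ht₁ : 1 ≤ t₁ := by rw [ht₁def, le_div_iff₀ hA]; linarith
  have ht₂ : 1 ≤ t₂ := by rw [ht₂def, le_div_iff₀ hB]; linarith
  have hl0 : 0 ≤ A / (A + B) := by positivity
  have hm0 : 0 ≤ B / (A + B) := by positivity
  have hlm : A / (A + B) + B / (A + B) = 1 := by field_simp
  have hconvstep : ∀ i ∈ s,
      φ (a i + b i) ≤ A / (A + B) * φ (t₁ * a i) + B / (A + B) * φ (t₂ * b i) := by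
    intro i hi
    have h1 := hconv.2
      (Set.mem_Ici.2 (mul_nonneg (le_trans zero_le_one ht₁) (ha i hi)))
      (Set.mem_Ici.2 (mul_nonneg (le_trans zero_le_one ht₂) (hb i hi))) hl0 hm0 hlm
    rw [smul_eq_mul, smul_eq_mul] at h1
    have e : A / (A + B) * (t₁ * a i) + B / (A + B) * (t₂ * b i) = a i + b i := by
      rw [ht₁def, ht₂def]; field_simp
    rwa [e] at h1
  have hmain : ∑ i ∈ s, φ (a i + b i) ≤ φ (A + B) := by
    have hsum1 : ∑ i ∈ s, φ (t₁ * a i) ≤ φ (t₁ * A) := hscale a A t₁ hA ht₁ ha hφA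
    have hsum2 : ∑ i ∈ s, φ (t₂ * b i) ≤ φ (t₂ * B) := hscale b B t₂ hB ht₂ hb hφB
    have et₁ : t₁ * A = A + B := by rw [ht₁def]; field_simp
    have et₂ : t₂ * B = A + B := by rw [ht₂def]; field_simp
    calc ∑ i ∈ s, φ (a i + b i)
        ≤ ∑ i ∈ s, (A / (A + B) * φ (t₁ * a i) + B / (A + B) * φ (t₂ * b i)) :=
          Finset.sum_le_sum hconvstep
      _ = A / (A + B) * ∑ i ∈ s, φ (t₁ * a i) + B / (A + B) * ∑ i ∈ s, φ (t₂ * b i) := by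
          rw [Finset.sum_add_distrib, Finset.mul_sum, Finset.mul_sum]
      _ ≤ A / (A + B) * φ (t₁ * A) + B / (A + B) * φ (t₂ * B) := by
          gcongr
      _ = φ (A + B) := by rw [et₁, et₂]; field_simp
  -- conclude
  have hSc : 0 ≤ ∑ i ∈ s, φ (a i + b i) :=
    Finset.sum_nonneg fun i hi => hφ0le _ (by linarith [ha i hi, hb i hi])
  obtain ⟨hC0, hφC⟩ := hinv₂ _ (Set.mem_Ici.2 hSc)
  rw [Set.mem_Ici] at hC0
  apply hle_of_φle _ _ hC0 hAB.le
  rw [hφC]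
  exact hmain
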